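/- If A is a bounded positive injective operator on H and B is A-symmetric (B*A = AB), then for every f ∈ H, ⟨A(Bf), Bf⟩ ≤ ‖B‖² ⟨Af, f⟩; that is, the extension of B to the completion of H under the A-inner product is bounded with norm at most ‖B‖. -/

import Mathlib

open ContinuousLinearMap
open scoped InnerProductSpace

/-- If `A` is positive injective and `B` is `A`-symmetric, then
`⟨A (B f), B f⟩ ≤ ‖B‖² ⟨A f, f⟩` for every `f`: the extension of `B` to the completion of
`H` under the `A`-inner product is bounded with norm at most `‖B‖`. -/
theorem a_symmetric_extension_bounded
    {H : Type*} [NormedAddCommGroup H] [InnerProductSpace ℂ H] [CompleteSpace H]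
    (A B : H →L[ℂ] H) (hA : A.IsPositive) (hAinj : Function.Injective A)
    (hB : (adjoint B) ∘L A = A ∘L B) :
    ∀ f : H, (⟪A (B f), B f⟫_ℂ).re ≤ ‖B‖ ^ 2 * (⟪A f, f⟫_ℂ).re := by
  intro f
  set Q : H → ℝ := fun g => (⟪A g, g⟫_ℂ).re with hQdef
  have hQnonneg : ∀ g, 0 ≤ Q g := fun g => hA.re_inner_nonneg_left g
  have hadj : adjoint A = A := hA.isSelfAdjoint.adjoint_eq
  -- the semi-inner-product core
  let c : PreInnerProductSpace.Core ℂ H :=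
    { inner := fun x y => ⟪A x, y⟫_ℂ
      conj_inner_symm := by
        intro x y
        show (starRingEnd ℂ) ⟪A y, x⟫_ℂ = ⟪A x, y⟫_ℂ
        rw [inner_conj_symm, ← adjoint_inner_left, hadj]
      re_inner_nonneg := fun x => hA.re_inner_nonneg_left x
      add_left := by intro x y z; simp [inner_add_left]
      smul_left := by intro x y r; simp [inner_smul_left, mul_comm] }
  have CS : ∀ x y : H, ‖⟪A x, y⟫_ℂ‖ ^ 2 ≤ Q x * Q y := by
    intro x y
    have h : ‖⟪A x, y⟫_ℂ‖ * ‖⟪A y, x⟫_ℂ‖ ≤ (⟪A x, x⟫_ℂ).re * (⟪A y, y⟫_ℂ).re :=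
      @InnerProductSpace.Core.inner_mul_inner_self_le ℂ H _ _ _ c x y
    have hsymm : ‖⟪A y, x⟫_ℂ‖ = ‖⟪A x, y⟫_ℂ‖ := by
      rw [← inner_conj_symm, ← adjoint_inner_left, hadj, RCLike.norm_conj]
    rw [hsymm] at h
    simpa [sq] using h
  have hBm : adjoint B * A = A * B := hB
  -- powers commute through A
  have hBk : ∀ k : ℕ, (adjoint B) ^ k * A = A * B ^ k := by
    intro k
    induction k with
    | zero => simp
    | succ n ih => rw [pow_succ, pow_succ, mul_assoc, hBm, ← mul_assoc, ih, mul_assoc]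
  -- key identity
  have key : ∀ (k : ℕ) (g : H), ⟪A ((B ^ (2 * k)) g), g⟫_ℂ = ⟪A ((B ^ k) g), (B ^ k) g⟫_ℂ := by
    intro k g
    have h1 : A ∘L B ^ (2 * k) = (adjoint (B ^ k)) ∘L (A ∘L B ^ k) := by
      show A * B ^ (2 * k) = adjoint (B ^ k) * (A * B ^ k)
      rw [← star_eq_adjoint, star_pow, star_eq_adjoint, ← mul_assoc, hBk, mul_assoc, ← pow_add,
        two_mul]
    have h2 : A ((B ^ (2 * k)) g) = (adjoint (B ^ k)) (A ((B ^ k) g)) := by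
      have := congrArg (fun T : H →L[ℂ] H => T g) h1
      simpa using this
    rw [h2, adjoint_inner_left]
  -- Cauchy–Schwarz iteration step
  have step : ∀ (k : ℕ), Q ((B ^ k) f) ^ 2 ≤ Q ((B ^ (2 * k)) f) * Q f := by
    intro k
    have h1 : Q ((B ^ k) f) = (⟪A ((B ^ (2 * k)) f), f⟫_ℂ).re := by
      rw [key k f]
    have h2 : Q ((B ^ k) f) ≤ ‖⟪A ((B ^ (2 * k)) f), f⟫_ℂ‖ := by
      rw [h1]; exact Complex.re_le_norm _
    calc Q ((B ^ k) f) ^ 2 ≤ ‖⟪A ((B ^ (2 * k)) f), f⟫_ℂ‖ ^ 2 := by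
          apply pow_le_pow_left₀ (hQnonneg _) h2
      _ ≤ Q ((B ^ (2 * k)) f) * Q f := CS _ _
  -- the main induction
  have main : ∀ n : ℕ, Q (B f) ^ (2 ^ n) ≤ Q ((B ^ (2 ^ n)) f) * Q f ^ (2 ^ n - 1) := by
    intro n
    induction n with
    | zero => simp
    | succ n ih =>
      have h2n : 1 ≤ 2 ^ n := Nat.one_le_two_pow
      calc Q (B f) ^ 2 ^ (n + 1) = (Q (B f) ^ 2 ^ n) ^ 2 := by
            rw [← pow_mul, pow_succ]
        _ ≤ (Q ((B ^ (2 ^ n)) f) * Q f ^ (2 ^ n - 1)) ^ 2 := by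
            apply pow_le_pow_left₀ (pow_nonneg (hQnonneg _) _) ih
        _ = Q ((B ^ (2 ^ n)) f) ^ 2 * Q f ^ (2 * (2 ^ n - 1)) := by
            rw [mul_pow, ← pow_mul]; ring_nf
        _ ≤ (Q ((B ^ (2 * 2 ^ n)) f) * Q f) * Q f ^ (2 * (2 ^ n - 1)) := by
            apply mul_le_mul_of_nonneg_right (step _) (pow_nonneg (hQnonneg _) _)
        _ = Q ((B ^ (2 * 2 ^ n)) f) * Q f ^ (2 * (2 ^ n - 1) + 1) := by
            rw [pow_succ, mul_assoc, mul_comm (Q f)]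
        _ = Q ((B ^ (2 ^ (n + 1))) f) * Q f ^ (2 ^ (n + 1) - 1) := by
            congr 2
            · rw [pow_succ, mul_comm]
            · omega
  -- crude bound on Q
  have crude : ∀ g : H, Q g ≤ ‖A‖ * ‖g‖ ^ 2 := by
    intro g
    calc Q g ≤ ‖⟪A g, g⟫_ℂ‖ := Complex.re_le_norm _
      _ ≤ ‖A g‖ * ‖g‖ := norm_inner_le_norm _ _
      _ ≤ ‖A‖ * ‖g‖ * ‖g‖ := by
          apply mul_le_mul_of_nonneg_right (A.le_opNorm g) (norm_nonneg g)
      _ = ‖A‖ * ‖g‖ ^ 2 := by ring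
  have bound : ∀ n : ℕ, Q (B f) ^ (2 ^ n) ≤
      (‖A‖ * ‖f‖ ^ 2) * (‖B‖ ^ 2) ^ (2 ^ n) * Q f ^ (2 ^ n - 1) := by
    intro n
    refine (main n).trans (mul_le_mul_of_nonneg_right ?_ (pow_nonneg (hQnonneg _) _))
    calc Q ((B ^ (2 ^ n)) f) ≤ ‖A‖ * ‖(B ^ (2 ^ n)) f‖ ^ 2 := crude _
      _ ≤ (‖A‖ * ‖f‖ ^ 2) * (‖B‖ ^ 2) ^ (2 ^ n) := by
          have h1 : ‖(B ^ (2 ^ n)) f‖ ≤ ‖B‖ ^ (2 ^ n) * ‖f‖ := by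
            calc ‖(B ^ (2 ^ n)) f‖ ≤ ‖B ^ (2 ^ n)‖ * ‖f‖ := le_opNorm _ _
              _ ≤ ‖B‖ ^ (2 ^ n) * ‖f‖ :=
                mul_le_mul_of_nonneg_right (norm_pow_le' _ (Nat.pos_of_ne_zero (by positivity)))
                  (norm_nonneg f)
          have h2 : ‖(B ^ (2 ^ n)) f‖ ^ 2 ≤ (‖B‖ ^ (2 ^ n) * ‖f‖) ^ 2 :=
            pow_le_pow_left₀ (norm_nonneg _) h1 2
          calc ‖A‖ * ‖(B ^ (2 ^ n)) f‖ ^ 2 ≤ ‖A‖ * (‖B‖ ^ (2 ^ n) * ‖f‖) ^ 2 :=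
                mul_le_mul_of_nonneg_left h2 (norm_nonneg A)
            _ = (‖A‖ * ‖f‖ ^ 2) * (‖B‖ ^ 2) ^ (2 ^ n) := by
                rw [mul_pow, ← pow_mul, ← pow_mul, mul_comm 2 (2^n)]
                ring
  -- now the limit argument
  show Q (B f) ≤ ‖B‖ ^ 2 * Q f
  set x := Q (B f) with hx
  set y := Q f with hy
  set b := ‖B‖ ^ 2 with hb
  set C := ‖A‖ * ‖f‖ ^ 2 with hC
  have hxnn : 0 ≤ x := hQnonneg _
  have hynn : 0 ≤ y := hQnonneg _
  have hbnn : 0 ≤ b := by positivity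
  have hCnn : 0 ≤ C := by positivity
  have hbd : ∀ n : ℕ, x ^ (2 ^ n) ≤ C * b ^ (2 ^ n) * y ^ (2 ^ n - 1) := bound
  by_contra hcon
  push_neg at hcon
  -- hcon : b * y < x
  have hxpos : 0 < x := lt_of_le_of_lt (mul_nonneg hbnn hynn) hcon
  have hbpos : 0 < b := by
    rcases hbnn.lt_or_eq with h | h
    · exact h
    · exfalso
      have := hbd 1
      rw [← h] at this
      simp at this
      nlinarith [this, hxpos]
  have hypos : 0 < y := by
    rcases hynn.lt_or_eq with h | h
    · exact h
    · exfalso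
      have := hbd 1
      rw [← h] at this
      norm_num at this
      nlinarith [this, hxpos]
  -- set r := x / (b * y) > 1
  have hbypos : 0 < b * y := mul_pos hbpos hypos
  set r := x / (b * y) with hr
  have hr1 : 1 < r := (one_lt_div hbypos).2 hcon
  -- r ^ (2 ^ n) ≤ C / y
  have hrle : ∀ n : ℕ, r ^ (2 ^ n) ≤ C / y := by
    intro n
    rw [hr, div_pow, div_le_div_iff₀ (by positivity) hypos]
    have h1 : y ^ (2 ^ n) = y ^ (2 ^ n - 1) * y := by
      rw [← pow_succ]
      congr 1
      have := Nat.one_le_two_pow (n := n)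
      omega
    calc x ^ 2 ^ n * y ≤ (C * b ^ (2 ^ n) * y ^ (2 ^ n - 1)) * y :=
          mul_le_mul_of_nonneg_right (hbd n) hynn
      _ = C * (b * y) ^ 2 ^ n := by rw [mul_pow, h1]; ring
  -- contradiction via Bernoulli
  obtain ⟨n, hn⟩ := exists_nat_gt ((C / y) / (r - 1))
  have hber : 1 + (2 ^ n : ℝ) * (r - 1) ≤ r ^ (2 ^ n) := by
    have := one_add_mul_le_pow (a := r - 1) (by linarith) (2 ^ n)
    simpa using this
  have h2n : (n : ℝ) ≤ (2 ^ n : ℕ) := by exact_mod_cast (Nat.lt_two_pow_self (n := n)).le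
  have hrpos : 0 < r - 1 := by linarith
  have : C / y < r ^ (2 ^ n) := by
    have h3 : (C / y) < (n : ℝ) * (r - 1) := by
      rw [div_lt_iff₀ hrpos] at hn
      linarith
    have h4 : (n : ℝ) * (r - 1) ≤ (2 ^ n : ℝ) * (r - 1) := by
      apply mul_le_mul_of_nonneg_right _ hrpos.le
      exact_mod_cast h2n
    nlinarith
  exact absurd (hrle n) (not_le.2 this)
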